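/- For nonnegative integers i, j, n with j ≤ n: ∫₀^∞ X^i · (dʲ/dXʲ L_n)(X) · e^{−X} dX = (−1)ⁿ · (n−j+1)_j · (i−n+1)_{n−j} · (n+1)_{i−n}, where (z)_m denotes the rising factorial (Pochhammer symbol); and the integral is 0 when j > n. In particular, the integral vanishes whenever j ≤ i < n. -/

import Mathlib

open Polynomial MeasureTheory

/-- The `n`-th Laguerre polynomial over `ℝ`: `L_n(X) = ∑_{k=0}^{n} C(n,k)(−X)^k/k!`. -/
noncomputable def laguerreR (n : ℕ) : Polynomial ℝ :=
  ∑ k ∈ Finset.range (n + 1), C ((n.choose k : ℝ) / k.factorial) * (-X) ^ k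

/-- The Pochhammer symbol (rising factorial) `(z)_m` for an integer index `m`, with
`(z)_m = z(z+1)⋯(z+m−1)` for `m ≥ 0` and `(z)_{−k} = 1/((z−k)_k)` for `k > 0`. -/
noncomputable def poch (z : ℝ) (m : ℤ) : ℝ :=
  if 0 ≤ m then (ascPochhammer ℝ m.toNat).eval z
  else 1 / ((ascPochhammer ℝ (-m).toNat).eval (z + m))

open Finset

section Aux

lemma alt_pascal (n : ℕ) (g : ℕ → ℝ) :
    ∑ k ∈ range (n+2), (-1:ℝ)^k * ((n+1).choose k) * g k
      = ∑ k ∈ range (n+1), (-1:ℝ)^k * (n.choose k) * g k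
        - ∑ k ∈ range (n+1), (-1:ℝ)^k * (n.choose k) * g (k+1) := by
  have key : ∑ k ∈ range (n+1), (-1:ℝ)^(k+1) * (n.choose (k+1)) * g (k+1)
      = (∑ k ∈ range (n+1), (-1:ℝ)^k * (n.choose k) * g k) - g 0 := by
    have h1 := Finset.sum_range_succ' (fun k => (-1:ℝ)^k * (n.choose k) * g k) n
    have h2 : ∑ k ∈ range (n+1), (-1:ℝ)^(k+1) * (n.choose (k+1)) * g (k+1)
        = ∑ k ∈ range n, (-1:ℝ)^(k+1) * (n.choose (k+1)) * g (k+1) := by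
      rw [Finset.sum_range_succ, Nat.choose_succ_self]; simp
    simp only [pow_zero, Nat.choose_zero_right, Nat.cast_one, one_mul] at h1
    rw [h2, h1]; ring
  rw [Finset.sum_range_succ' (fun k => (-1:ℝ)^k * ((n+1).choose k) * g k) (n+1)]
  simp only [Nat.choose_succ_succ, Nat.cast_add, pow_zero, Nat.choose_zero_right, Nat.cast_one,
    one_mul]
  have split : ∑ k ∈ range (n+1), (-1:ℝ)^(k+1) * (↑(n.choose k) + ↑(n.choose (k+1))) * g (k+1)
      = (- ∑ k ∈ range (n+1), (-1:ℝ)^k * (n.choose k) * g (k+1))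
        + ∑ k ∈ range (n+1), (-1:ℝ)^(k+1) * (n.choose (k+1)) * g (k+1) := by
    rw [← Finset.sum_neg_distrib, ← Finset.sum_add_distrib]
    apply Finset.sum_congr rfl; intro k _; ring
  rw [split, key]; ring

lemma poch_eval_succ_left (s : ℕ) (y : ℝ) :
    (ascPochhammer ℝ (s+1)).eval y = y * (ascPochhammer ℝ s).eval (y+1) := by
  rw [ascPochhammer_succ_left, X_mul, eval_mul_X, eval_comp]
  simp [mul_comm]

lemma poch_sub (s : ℕ) (y : ℝ) :
    (ascPochhammer ℝ (s+1)).eval y - (ascPochhammer ℝ (s+1)).eval (y+1)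
      = -((s:ℝ)+1) * (ascPochhammer ℝ s).eval (y+1) := by
  rw [poch_eval_succ_left, ascPochhammer_succ_eval]
  ring

lemma lemA (i : ℕ) : ∀ (n : ℕ) (x : ℝ),
    ∑ k ∈ range (n+1), (-1:ℝ)^k * (n.choose k) * (ascPochhammer ℝ i).eval (x + k)
      = (-1:ℝ)^n * (i.descFactorial n) * (ascPochhammer ℝ (i - n)).eval (x + n) := by
  intro n
  induction n with
  | zero => intro x; simp
  | succ n ih =>
    intro x
    have hp := alt_pascal n (fun k => (ascPochhammer ℝ i).eval (x + k))
    have h2 : ∀ k : ℕ, (ascPochhammer ℝ i).eval (x + ((k:ℝ)+1)) = (ascPochhammer ℝ i).eval ((x+1) + k) := by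
      intro k; ring_nf
    simp only [Nat.cast_add, Nat.cast_one] at hp h2 ⊢
    rw [show n + 1 + 1 = n + 2 from rfl] at hp ⊢
    rw [hp]
    simp only [h2]
    rw [ih x, ih (x+1)]
    rcases le_or_gt i n with hle | hlt
    · have e1 : i - n = 0 := Nat.sub_eq_zero_of_le hle
      have e2 : i - (n+1) = 0 := Nat.sub_eq_zero_of_le (hle.trans (Nat.le_succ n))
      have e3 : i.descFactorial (n+1) = 0 := Nat.descFactorial_eq_zero_iff_lt.2 (Nat.lt_succ_of_le hle)
      rw [e1, e2, e3]
      simp [ascPochhammer_zero]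
    · obtain ⟨r, hr⟩ : ∃ r, i - n = r + 1 := ⟨i - n - 1, by omega⟩
      have hr2 : i - (n+1) = r := by omega
      have hd : (i.descFactorial (n+1) : ℝ) = (i.descFactorial n : ℝ) * ((i:ℝ) - n) := by
        rw [Nat.descFactorial_succ, Nat.cast_mul, Nat.cast_sub hlt.le]; ring
      rw [hr, hr2, hd]
      have key : (ascPochhammer ℝ (r+1)).eval (x + n) - (ascPochhammer ℝ (r+1)).eval (x + n + 1)
          = -((r:ℝ)+1) * (ascPochhammer ℝ r).eval (x + n + 1) := poch_sub r (x + n)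
      have hr3 : ((r:ℝ)+1) = (i:ℝ) - n := by
        have : i = n + (r+1) := by omega
        subst this; push_cast; ring
      have harg : x + 1 + (n:ℝ) = x + (n:ℝ) + 1 := by ring
      rw [harg]
      calc (-1:ℝ)^n * (i.descFactorial n) * (ascPochhammer ℝ (r+1)).eval (x + n)
            - (-1:ℝ)^n * (i.descFactorial n) * (ascPochhammer ℝ (r+1)).eval (x + n + 1)
          = (-1:ℝ)^n * (i.descFactorial n) * ((ascPochhammer ℝ (r+1)).eval (x + n) - (ascPochhammer ℝ (r+1)).eval (x + n + 1)) := by ring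
        _ = (-1:ℝ)^n * (i.descFactorial n) * (-((r:ℝ)+1) * (ascPochhammer ℝ r).eval (x + n + 1)) := by rw [key]
        _ = (-1:ℝ)^(n+1) * ((i.descFactorial n : ℝ) * ((i:ℝ) - n)) * (ascPochhammer ℝ r).eval (x + (n+1)) := by
              rw [← hr3]; ring_nf

lemma lemB (e : ℕ) : ∀ (N : ℕ) (i : ℕ),
    ∑ m ∈ range (N+1), (-1:ℝ)^m * (N.choose m) * ((m+i).factorial / (m+i+e+1).factorial)
      = ((i.factorial : ℝ) * (N+e).factorial) / (e.factorial * (N+i+e+1).factorial) := by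
  intro N
  induction N with
  | zero =>
    intro i
    simp only [range_one, sum_singleton, pow_zero, Nat.choose_zero_right, Nat.cast_one, one_mul,
      zero_add]
    rw [div_eq_div_iff (by positivity) (by positivity)]
    ring
  | succ N ih =>
    intro i
    have hp := alt_pascal N (fun m => ((m+i).factorial / (m+i+e+1).factorial : ℝ))
    rw [show N + 1 + 1 = N + 2 from rfl] at hp
    rw [hp]
    have hshift : ∀ m : ℕ, ((m+1+i).factorial / (m+1+i+e+1).factorial : ℝ)
        = ((m+(i+1)).factorial / (m+(i+1)+e+1).factorial : ℝ) := by
      intro m; rw [show m+1+i = m+(i+1) from by omega]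
    simp only [hshift]
    rw [ih i, ih (i+1)]
    rw [div_sub_div _ _ (by positivity) (by positivity), div_eq_div_iff (by positivity) (by positivity)]
    have f1 : ((N+1+e).factorial : ℝ) = ((N:ℝ)+1+e) * (N+e).factorial := by
      rw [show N+1+e = (N+e)+1 from by omega, Nat.factorial_succ]; push_cast; ring
    have f2 : ((N+(i+1)+e+1).factorial : ℝ) = ((N:ℝ)+i+e+2) * (N+i+e+1).factorial := by
      rw [show N+(i+1)+e+1 = (N+i+e+1)+1 from by omega, Nat.factorial_succ]; push_cast; ring
    have f3 : ((i+1).factorial : ℝ) = ((i:ℝ)+1) * i.factorial := by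
      rw [Nat.factorial_succ]; push_cast; ring
    have f4 : ((N+1+i+e+1).factorial : ℝ) = ((N:ℝ)+i+e+2) * (N+i+e+1).factorial := by
      rw [show N+1+i+e+1 = (N+i+e+1)+1 from by omega, Nat.factorial_succ]; push_cast; ring
    rw [f1, f2, f3, f4]
    ring

lemma poch_eval_neg_nat (r a : ℕ) :
    (ascPochhammer ℝ r).eval (-(a:ℝ)) = (-1:ℝ)^r * (a.descFactorial r : ℝ) := by
  induction r with
  | zero => simp
  | succ r ih =>
    rw [ascPochhammer_succ_eval, ih, Nat.descFactorial_succ]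
    rcases le_or_gt (r+1) a with h | h
    · rw [Nat.cast_mul, Nat.cast_sub (by omega : r ≤ a)]
      ring
    · rcases eq_or_lt_of_le (by omega : a ≤ r) with h' | h'
      · subst h'
        rw [Nat.sub_self]
        push_cast
        ring
      · rw [Nat.descFactorial_eq_zero_iff_lt.2 h']
        push_cast
        ring

lemma poch_eval_nat_add_one (r a : ℕ) :
    (ascPochhammer ℝ r).eval ((a:ℝ)+1) = ((a+1).ascFactorial r : ℝ) := by
  have h := ascPochhammer_eval_cast (S := ℝ) r (a+1)
  rw [ascPochhammer_nat_eq_ascFactorial] at h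
  rw [Nat.cast_add, Nat.cast_one] at h
  exact h.symm

lemma asc_cast (a r : ℕ) :
    ((a+1).ascFactorial r : ℝ) = ((a+r).factorial : ℝ) / (a.factorial : ℝ) := by
  rw [eq_div_iff (by positivity)]
  rw [← Nat.cast_mul, mul_comm, Nat.factorial_mul_ascFactorial]

lemma desc_cast {a r : ℕ} (h : r ≤ a) :
    ((a.descFactorial r : ℝ)) = (a.factorial : ℝ) / ((a-r).factorial : ℝ) := by
  rw [eq_div_iff (by positivity)]
  rw [← Nat.cast_mul, mul_comm, Nat.factorial_mul_descFactorial h]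

lemma integrable_pow_exp (m : ℕ) :
    IntegrableOn (fun x : ℝ => x ^ m * Real.exp (-x)) (Set.Ioi 0) := by
  have h := Real.GammaIntegral_convergent (s := (m:ℝ)+1) (by positivity)
  apply h.congr_fun ?_ measurableSet_Ioi
  intro x hx
  simp only [add_sub_cancel_right]
  rw [Real.rpow_natCast]
  ring

lemma integral_pow_exp (m : ℕ) :
    ∫ x in Set.Ioi (0:ℝ), x ^ m * Real.exp (-x) = m.factorial := by
  have h := Real.Gamma_eq_integral (s := (m:ℝ)+1) (by positivity)
  rw [Real.Gamma_nat_eq_factorial] at h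
  rw [h]
  apply setIntegral_congr_fun measurableSet_Ioi
  intro x hx
  simp only [add_sub_cancel_right]
  rw [Real.rpow_natCast]
  ring

lemma deriv_laguerre (n j : ℕ) :
    Polynomial.derivative^[j] (laguerreR n)
      = ∑ k ∈ range (n+1),
          C ((-1:ℝ)^k * (n.choose k) * (k.descFactorial j) / k.factorial) * X ^ (k - j) := by
  unfold laguerreR
  rw [Polynomial.iterate_derivative_sum]
  apply Finset.sum_congr rfl
  intro k _
  rw [show ((-X : Polynomial ℝ)) ^ k = C ((-1:ℝ)^k) * X ^ k by
    rw [neg_pow]; simp [map_pow, C_neg, ← C_pow]]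
  rw [← mul_assoc, ← C_mul, Polynomial.iterate_derivative_C_mul,
    Polynomial.iterate_derivative_X_pow_eq_C_mul, ← mul_assoc, ← C_mul]
  congr 1
  congr 1
  ring

lemma integral_eq_sum (i j n : ℕ) :
    ∫ x in Set.Ioi (0:ℝ), x ^ i * (Polynomial.derivative^[j] (laguerreR n)).eval x * Real.exp (-x)
      = ∑ k ∈ range (n+1), (-1:ℝ)^k * (n.choose k) *
          ((k.descFactorial j : ℝ) / k.factorial * (i + (k-j)).factorial) := by
  rw [deriv_laguerre]
  rw [setIntegral_congr_fun (f := fun x => x ^ i * (eval x (∑ k ∈ range (n+1),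
        C ((-1:ℝ)^k * (n.choose k) * (k.descFactorial j) / k.factorial) * X ^ (k - j))) * Real.exp (-x))
      (g := fun x => ∑ k ∈ range (n+1), ((-1:ℝ)^k * (n.choose k) * (k.descFactorial j) / k.factorial)
        * (x ^ (i + (k-j)) * Real.exp (-x)))
      measurableSet_Ioi ?_]
  · rw [integral_finset_sum _ (fun k _ => ((integrable_pow_exp (i + (k-j))).const_mul _)),]
    apply Finset.sum_congr rfl
    intro k _
    rw [MeasureTheory.integral_const_mul, integral_pow_exp]
    ring
  · intro x _
    simp only [eval_finset_sum, eval_mul, eval_C, eval_pow, eval_X]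
    rw [Finset.mul_sum, Finset.sum_mul]
    apply Finset.sum_congr rfl
    intro k _
    rw [pow_add]
    ring

lemma sum_eval_ge (i j n : ℕ) (hji : j ≤ i) :
    ∑ k ∈ range (n+1), (-1:ℝ)^k * (n.choose k) *
        ((k.descFactorial j : ℝ) / k.factorial * (i + (k-j)).factorial)
      = (-1:ℝ)^n * (i.descFactorial n) * (ascPochhammer ℝ (i - n)).eval ((1:ℝ) - j + n) := by
  have := lemA i n (1 - (j:ℝ))
  rw [← this]
  apply Finset.sum_congr rfl
  intro k _
  congr 1
  rcases lt_or_ge k j with h | h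
  · rw [Nat.descFactorial_eq_zero_iff_lt.2 h]
    have harg : (1:ℝ) - j + k = -((j - k - 1 : ℕ):ℝ) := by
      rw [Nat.cast_sub (show 1 ≤ j - k by omega), Nat.cast_sub h.le, Nat.cast_one]; ring
    rw [harg, poch_eval_neg_nat, Nat.descFactorial_eq_zero_iff_lt.2 (by omega : j - k - 1 < i)]
    simp
  · have harg : (1:ℝ) - j + k = ((k - j:ℕ):ℝ) + 1 := by
      rw [Nat.cast_sub h]; ring
    rw [harg, poch_eval_nat_add_one]
    rw [div_mul_eq_mul_div, div_eq_iff (by positivity : (k.factorial:ℝ) ≠ 0)]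
    rw [← Nat.cast_mul, ← Nat.cast_mul]
    congr 1
    apply Nat.eq_of_mul_eq_mul_left (Nat.factorial_pos (k-j))
    rw [← mul_assoc, Nat.factorial_mul_descFactorial h, ← mul_assoc,
      Nat.factorial_mul_ascFactorial, mul_comm (k.factorial), add_comm (k-j) i]

end Aux

/-- `∫₀^∞ X^i (dʲ/dXʲ L_n)(X) e^{−X} dX = (−1)ⁿ (n−j+1)_j (i−n+1)_{n−j} (n+1)_{i−n}`
for `j ≤ n`; the integral is `0` for `j > n`; and it vanishes whenever `j ≤ i < n`. -/
theorem integral_pow_deriv_laguerre (i j n : ℕ) :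
    (j ≤ n →
      ∫ x in Set.Ioi (0 : ℝ),
          x ^ i * (Polynomial.derivative^[j] (laguerreR n)).eval x * Real.exp (-x) =
        (-1) ^ n * poch ((n : ℝ) - j + 1) j * poch ((i : ℝ) - n + 1) (n - j) *
          poch ((n : ℝ) + 1) ((i : ℤ) - n)) ∧
    (n < j →
      ∫ x in Set.Ioi (0 : ℝ),
          x ^ i * (Polynomial.derivative^[j] (laguerreR n)).eval x * Real.exp (-x) = 0) ∧
    (j ≤ i → i < n →
      ∫ x in Set.Ioi (0 : ℝ),
          x ^ i * (Polynomial.derivative^[j] (laguerreR n)).eval x * Real.exp (-x) = 0) := by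
  have hdeg : (laguerreR n).natDegree ≤ n := by
    unfold laguerreR
    apply Polynomial.natDegree_sum_le_of_forall_le
    intro k hk
    refine le_trans (Polynomial.natDegree_C_mul_le _ _) ?_
    refine le_trans (Polynomial.natDegree_pow_le) ?_
    rw [Polynomial.natDegree_neg, Polynomial.natDegree_X]
    simpa [Nat.lt_succ_iff] using hk
  refine ⟨?_, ?_, ?_⟩
  · -- case j ≤ n
    intro hj
    have nz : ∀ t:ℕ, ((t.factorial : ℝ)) ≠ 0 := fun t => by positivity
    rcases le_or_gt j i with hji | hij
    · -- j ≤ i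
      rw [integral_eq_sum, sum_eval_ge i j n hji]
      rcases le_or_gt n i with hni | hin
      · -- n ≤ i
        obtain ⟨q, rfl⟩ : ∃ q, n = j + q := ⟨n - j, by omega⟩
        obtain ⟨p, rfl⟩ : ∃ p, i = j + q + p := ⟨i - (j+q), by omega⟩
        have e1 : (j+q+p) - (j+q) = p := by omega
        have h1 : poch (((j+q : ℕ) : ℝ) - j + 1) j = ((q+1).ascFactorial j : ℝ) := by
          rw [poch, if_pos (Int.natCast_nonneg j), Int.toNat_natCast,
            show (((j+q : ℕ) : ℝ) - j + 1) = ((q:ℕ):ℝ) + 1 by push_cast; ring,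
            poch_eval_nat_add_one]
        have h2 : poch (((j+q+p : ℕ) : ℝ) - ((j+q : ℕ):ℝ) + 1) (((j+q : ℕ):ℤ) - (j : ℕ))
            = ((p+1).ascFactorial q : ℝ) := by
          rw [poch, if_pos (by omega : (0:ℤ) ≤ ((j+q:ℕ):ℤ) - (j:ℕ)),
            show (((j+q:ℕ):ℤ) - ((j:ℕ):ℤ)) = ((q:ℕ):ℤ) by push_cast; ring, Int.toNat_natCast,
            show (((j+q+p : ℕ) : ℝ) - ((j+q : ℕ):ℝ) + 1) = ((p:ℕ):ℝ) + 1 by push_cast; ring,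
            poch_eval_nat_add_one]
        have h3 : poch (((j+q:ℕ) : ℝ) + 1) (((j+q+p:ℕ) : ℤ) - ((j+q:ℕ) : ℤ))
            = (((j+q)+1).ascFactorial p : ℝ) := by
          rw [poch, if_pos (by push_cast; omega),
            show ((((j+q+p:ℕ) : ℤ) - ((j+q:ℕ) : ℤ))) = ((p:ℕ):ℤ) by push_cast; ring,
            Int.toNat_natCast, poch_eval_nat_add_one]
        rw [e1, h1, h2, h3,
          show ((1:ℝ) - j + ((j+q:ℕ))) = ((q:ℕ):ℝ) + 1 by push_cast; ring,
          poch_eval_nat_add_one,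
          desc_cast (by omega : j + q ≤ j+q+p), asc_cast, asc_cast, asc_cast, asc_cast,
          show (j+q+p) - (j+q) = p by omega, show q + j = j + q by omega,
          show p + q = q + p by omega, show (j+q) + p = j + q + p by omega]
        field_simp
      · -- j ≤ i < n : both sides are 0
        have h2 : poch ((i : ℝ) - n + 1) ((n:ℤ) - (j:ℕ)) = 0 := by
          rw [poch, if_pos (by omega : (0:ℤ) ≤ (n:ℤ) - (j:ℕ)),
            show ((n:ℤ) - ((j:ℕ):ℤ)) = ((n-j:ℕ):ℤ) by omega, Int.toNat_natCast,
            show ((i : ℝ) - n + 1) = -(((n-i-1:ℕ)):ℝ) by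
              rw [Nat.cast_sub (by omega), Nat.cast_sub (by omega)]; push_cast; ring,
            poch_eval_neg_nat, Nat.descFactorial_eq_zero_iff_lt.2 (by omega : n-i-1 < n-j)]
          simp
        rw [h2, Nat.descFactorial_eq_zero_iff_lt.2 hin]
        simp
    · -- i < j ≤ n
      rw [integral_eq_sum]
      obtain ⟨d, rfl⟩ : ∃ d, j = i + d + 1 := ⟨j - i - 1, by omega⟩
      obtain ⟨N, rfl⟩ : ∃ N, n = (i+d+1) + N := ⟨n - (i+d+1), by omega⟩
      have hzero : ∀ k ∈ range ((i+d+1+N)+1), k ∉ Ico (i+d+1) ((i+d+1+N)+1) →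
          (-1:ℝ)^k * ((i+d+1+N).choose k) *
            ((k.descFactorial (i+d+1) : ℝ) / k.factorial * (i + (k-(i+d+1))).factorial) = 0 := by
        intro k hk hk'
        simp only [mem_range] at hk
        simp only [mem_Ico, not_and, not_lt] at hk'
        have hkj : k < i+d+1 := by by_contra h; exact absurd (hk' (by omega)) (by omega)
        rw [Nat.descFactorial_eq_zero_iff_lt.2 hkj]
        simp
      rw [← Finset.sum_subset (fun x hx => by simp only [mem_Ico, mem_range] at *; omega) hzero,
        Finset.sum_Ico_eq_sum_range, show (i+d+1+N)+1 - (i+d+1) = N+1 by omega]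
      have hterm : ∀ m ∈ range (N+1),
          (-1:ℝ)^((i+d+1)+m) * ((i+d+1+N).choose ((i+d+1)+m)) *
            (((((i+d+1)+m).descFactorial (i+d+1) : ℝ)) / (((i+d+1)+m).factorial) *
              ((i + (((i+d+1)+m)-(i+d+1))).factorial))
          = ((-1:ℝ)^(i+d+1) * ((i+d+1+N).factorial / N.factorial)) *
              ((-1:ℝ)^m * (N.choose m) * ((m+i).factorial / (m+i+d+1).factorial)) := by
        intro m hm
        simp only [mem_range] at hm
        rw [show ((i+d+1)+m)-(i+d+1) = m by omega,
          desc_cast (by omega : i+d+1 ≤ (i+d+1)+m), show ((i+d+1)+m)-(i+d+1) = m by omega,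
          Nat.cast_choose (K := ℝ) (by omega : (i+d+1)+m ≤ i+d+1+N),
          show (i+d+1+N) - ((i+d+1)+m) = N-m by omega,
          Nat.cast_choose (K := ℝ) (by omega : m ≤ N),
          show m+i+d+1 = (i+d+1)+m by omega, show m+i = i+m by omega]
        have hNm := nz (N-m)
        field_simp
        ring
      rw [Finset.sum_congr rfl hterm, ← Finset.mul_sum, lemB d N i]
      have h1 : poch (((i+d+1+N:ℕ) : ℝ) - ((i+d+1:ℕ)) + 1) ((i+d+1:ℕ))
          = ((N+1).ascFactorial (i+d+1) : ℝ) := by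
        rw [poch, if_pos (Int.natCast_nonneg _), Int.toNat_natCast,
          show (((i+d+1+N:ℕ) : ℝ) - ((i+d+1:ℕ)) + 1) = ((N:ℕ):ℝ) + 1 by push_cast; ring,
          poch_eval_nat_add_one]
      have h2 : poch ((i : ℝ) - ((i+d+1+N:ℕ)) + 1) (((i+d+1+N:ℕ):ℤ) - ((i+d+1:ℕ):ℤ))
          = (-1:ℝ)^N * ((d+N).descFactorial N : ℝ) := by
        rw [poch, if_pos (by push_cast; omega),
          show ((((i+d+1+N:ℕ)):ℤ) - (((i+d+1:ℕ)):ℤ)) = ((N:ℕ):ℤ) by push_cast; ring,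
          Int.toNat_natCast,
          show ((i : ℝ) - ((i+d+1+N:ℕ)) + 1) = -(((d+N:ℕ)):ℝ) by push_cast; ring,
          poch_eval_neg_nat]
      have h3 : poch (((i+d+1+N:ℕ) : ℝ) + 1) ((i : ℤ) - ((i+d+1+N:ℕ)))
          = 1 / ((i+1).ascFactorial (d+1+N) : ℝ) := by
        rw [poch, if_neg (by push_cast; omega),
          show (-((i : ℤ) - ((i+d+1+N:ℕ):ℤ))) = ((d+1+N:ℕ):ℤ) by push_cast; ring,
          Int.toNat_natCast,
          show (((i+d+1+N:ℕ) : ℝ) + 1 + (((i : ℤ) - ((i+d+1+N:ℕ):ℤ) : ℤ) : ℝ)) = ((i:ℕ):ℝ) + 1 by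
            push_cast; ring,
          poch_eval_nat_add_one]
      rw [h1, h2, h3]
      have hNN : ((-1:ℝ))^N * (-1)^N = 1 := by
        rw [← pow_add]
        exact Even.neg_one_pow ⟨N, rfl⟩
      have reorg : ∀ a1 a2 a3 : ℝ, (-1:ℝ)^(i+d+1+N) * a1 * ((-1:ℝ)^N * a2) * a3
          = ((-1:ℝ)^N * (-1)^N) * ((-1:ℝ)^(i+d+1) * a1 * a2 * a3) := by
        intro a1 a2 a3
        rw [pow_add]
        ring
      rw [reorg, hNN, one_mul,
        desc_cast (by omega : N ≤ d+N), show (d+N)-N = d by omega,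
        asc_cast, asc_cast, show N+(i+d+1) = i+d+1+N by omega,
        show i+(d+1+N) = i+d+1+N by omega,
        show N+i+d+1 = i+d+1+N by omega, show N+d = d+N by omega]
      field_simp
  · -- case n < j
    intro hj
    rw [Polynomial.iterate_derivative_eq_zero (lt_of_le_of_lt hdeg hj)]
    simp
  · -- case j ≤ i < n
    intro hji hin
    rw [integral_eq_sum, sum_eval_ge i j n hji,
      Nat.descFactorial_eq_zero_iff_lt.2 hin]
    simp
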